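/- arXiv:2304.14112 — 4 statements merged into one kernel-verified Lean document; each statement's English description precedes it below -/
import Mathlib

section
/- For the div–curl operator on ℝ³, whose symbol at ξ ∈ ℝ³ sends v ∈ ℝ³ to (ξ · v, ξ × v) ∈ ℝ × ℝ³, one has ⋂_{ξ ∈ ℝ³ \ {0}} { (ξ · v, ξ × v) : v ∈ ℝ³ } = ℝ × {0}; in particular this intersection is not reduced to {0}, so the div–curl operator is not cancelling. -/
/-- For the div–curl operator on `ℝ³`, whose symbol at `ξ` sends `v` to
`(ξ · v, ξ × v)`, the intersection over `ξ ≠ 0` of the images of the symbol equals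
`ℝ × {0}`; in particular it is not reduced to `{0}`, so the operator is not
cancelling. -/
theorem stmt7 :
    (⋂ ξ ∈ {ξ : Fin 3 → ℝ | ξ ≠ 0},
        {p : ℝ × (Fin 3 → ℝ) | ∃ v : Fin 3 → ℝ, p = (∑ i, ξ i * v i, crossProduct ξ v)})
      = Set.univ ×ˢ ({0} : Set (Fin 3 → ℝ)) ∧
    (⋂ ξ ∈ {ξ : Fin 3 → ℝ | ξ ≠ 0},
        {p : ℝ × (Fin 3 → ℝ) | ∃ v : Fin 3 → ℝ, p = (∑ i, ξ i * v i, crossProduct ξ v)})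
      ≠ ({0} : Set (ℝ × (Fin 3 → ℝ))) := by
  have hset : (⋂ ξ ∈ {ξ : Fin 3 → ℝ | ξ ≠ 0},
        {p : ℝ × (Fin 3 → ℝ) | ∃ v : Fin 3 → ℝ, p = (∑ i, ξ i * v i, crossProduct ξ v)})
      = Set.univ ×ˢ ({0} : Set (Fin 3 → ℝ)) := by
    ext ⟨a, w⟩
    simp only [Set.mem_iInter, Set.mem_setOf_eq, Set.mem_prod, Set.mem_univ,
      Set.mem_singleton_iff, true_and, Prod.mk.injEq]
    constructor
    · intro h
      funext j
      fin_cases j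
      · obtain ⟨v, _, hv2⟩ := h ![1,0,0] (by
          intro hξ; have := congrFun hξ 0; simp at this)
        rw [hv2]; simp [cross_apply]
      · obtain ⟨v, _, hv2⟩ := h ![0,1,0] (by
          intro hξ; have := congrFun hξ 1; simp at this)
        rw [hv2]; simp [cross_apply]
      · obtain ⟨v, _, hv2⟩ := h ![0,0,1] (by
          intro hξ; have := congrFun hξ 2; simp at this)
        rw [hv2]; simp [cross_apply]
    · intro hw ξ hξ
      have hs : (∑ i, ξ i * ξ i) ≠ 0 := by
        intro h0
        apply hξ
        funext i
        have hnn : ∀ j ∈ Finset.univ, 0 ≤ ξ j * ξ j := fun j _ => mul_self_nonneg _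
        have := (Finset.sum_eq_zero_iff_of_nonneg hnn).mp h0 i (Finset.mem_univ i)
        have : ξ i = 0 := by nlinarith
        simpa using this
      refine ⟨(a / ∑ i, ξ i * ξ i) • ξ, ?_, ?_⟩
      · have h1 : ∑ i, ξ i * ((a / ∑ i, ξ i * ξ i) • ξ) i
            = (a / ∑ i, ξ i * ξ i) * ∑ i, ξ i * ξ i := by
          rw [Finset.mul_sum]
          refine Finset.sum_congr rfl fun i _ => ?_
          simp [Pi.smul_apply, smul_eq_mul]; ring
        rw [h1, div_mul_cancel₀ _ hs]
      · rw [hw, map_smul, cross_self, smul_zero]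
  refine ⟨hset, ?_⟩
  rw [hset]
  intro h
  have : ((1 : ℝ), (0 : Fin 3 → ℝ)) ∈ Set.univ ×ˢ ({0} : Set (Fin 3 → ℝ)) := by simp
  rw [h] at this
  simp [Prod.ext_iff] at this
end

section
/- Let n ≥ 4 and m ∈ {2, …, n−2}. For ξ ∈ ℝⁿ and an alternating m-form v on ℝⁿ, let ξ ∧ v be the alternating (m+1)-form defined by (ξ ∧ v)(h₀, …, h_m) = Σ_{i=0}^{m} (−1)^i ⟨ξ, h_i⟩ v(h₀, …, ĥ_i, …, h_m), and let ξ ⌟ v be the alternating (m−1)-form defined by (ξ ⌟ v)(h₁, …, h_{m−1}) = v(ξ, h₁, …, h_{m−1}). Then ⋂_{ξ ∈ ℝⁿ \ {0}} { (ξ ∧ v, ξ ⌟ v) : v an alternating m-form on ℝⁿ } = {(0,0)}; that is, the Hodge operator u ↦ (du, d*u) is cancelling. -/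
noncomputable section

/-- The exterior product `ξ ∧ v` of a vector with an alternating `m`-form, as a map
on `(m+1)`-tuples: `(ξ ∧ v)(h₀,…,h_m) = ∑ᵢ (−1)ⁱ ⟨ξ, hᵢ⟩ v(h₀,…,ĥᵢ,…,h_m)`. -/
def wedgeMap {n m : ℕ} (ξ : EuclideanSpace ℝ (Fin n))
    (v : AlternatingMap ℝ (EuclideanSpace ℝ (Fin n)) ℝ (Fin m)) :
    (Fin (m + 1) → EuclideanSpace ℝ (Fin n)) → ℝ :=
  fun h => ∑ i : Fin (m + 1),
    (-1 : ℝ) ^ (i : ℕ) * (inner ℝ ξ (h i) : ℝ) * v (fun j => h (i.succAbove j))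

/-- The interior product `ξ ⌟ v` of a vector with an alternating `m`-form, as a map
on `(m−1)`-tuples: `(ξ ⌟ v)(h₁,…,h_{m−1}) = v(ξ, h₁,…,h_{m−1})`. -/
def interiorMap {n m : ℕ} (ξ : EuclideanSpace ℝ (Fin n))
    (v : AlternatingMap ℝ (EuclideanSpace ℝ (Fin n)) ℝ (Fin m)) :
    (Fin (m - 1) → EuclideanSpace ℝ (Fin n)) → ℝ :=
  fun h => v (fun j : Fin m =>
    if h0 : (j : ℕ) = 0 then ξ else h ⟨(j : ℕ) - 1, by have := j.isLt; omega⟩)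

/-- There is a nonzero vector orthogonal to any family of fewer than `n` vectors. -/
lemma exists_orth {n k : ℕ} (hk : k < n) (f : Fin k → EuclideanSpace ℝ (Fin n)) :
    ∃ ξ : EuclideanSpace ℝ (Fin n), ξ ≠ 0 ∧ ∀ i, (inner ℝ ξ (f i) : ℝ) = 0 := by
  set K : Submodule ℝ (EuclideanSpace ℝ (Fin n)) := Submodule.span ℝ (Set.range f)
  have hKlt : K ≠ ⊤ := by
    have h1 : Module.finrank ℝ K ≤ k := by
      have := finrank_range_le_card (R := ℝ) f; rw [Fintype.card_fin] at this; exact this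
    have h2 : Module.finrank ℝ K < Module.finrank ℝ (EuclideanSpace ℝ (Fin n)) := by
      rw [finrank_euclideanSpace_fin]; omega
    exact (Submodule.lt_top_of_finrank_lt_finrank h2).ne
  have hKbot : Kᗮ ≠ ⊥ := fun h => hKlt (Submodule.orthogonal_eq_bot_iff.mp h)
  obtain ⟨ξ, hξK, hξ0⟩ := Submodule.exists_mem_ne_zero_of_ne_bot hKbot
  refine ⟨ξ, hξ0, fun i => ?_⟩
  have hfi : f i ∈ K := Submodule.subset_span ⟨i, rfl⟩
  have := (Submodule.mem_orthogonal K ξ).mp hξK (f i) hfi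
  rwa [real_inner_comm] at this

/-- The Hodge operator `u ↦ (du, d*u)` on `m`-forms, `2 ≤ m ≤ n−2`, is cancelling:
the intersection over `ξ ≠ 0` of the images `{(ξ ∧ v, ξ ⌟ v) : v}` of its symbol is
trivial. -/
theorem stmt8 (n m : ℕ) (hn : 4 ≤ n) (hm2 : 2 ≤ m) (hmn : m ≤ n - 2) :
    (⋂ ξ ∈ {ξ : EuclideanSpace ℝ (Fin n) | ξ ≠ 0},
        {p : ((Fin (m + 1) → EuclideanSpace ℝ (Fin n)) → ℝ)
            × ((Fin (m - 1) → EuclideanSpace ℝ (Fin n)) → ℝ) |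
          ∃ v : AlternatingMap ℝ (EuclideanSpace ℝ (Fin n)) ℝ (Fin m),
            p = (wedgeMap ξ v, interiorMap ξ v)})
      = {(0, 0)} := by
  apply Set.eq_singleton_iff_unique_mem.mpr
  constructor
  · simp only [Set.mem_iInter, Set.mem_setOf_eq]
    intro ξ hξ
    refine ⟨0, ?_⟩
    refine Prod.ext ?_ ?_
    · funext h; simp [wedgeMap]
    · funext h; simp [interiorMap]
  · intro p hp
    simp only [Set.mem_iInter, Set.mem_setOf_eq] at hp
    refine Prod.ext ?_ ?_
    · -- first component is 0
      funext h
      obtain ⟨ξ, hξ0, hξorth⟩ := exists_orth (k := m + 1) (by omega) h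
      obtain ⟨v, hv⟩ := hp ξ hξ0
      have h1 : p.1 = wedgeMap ξ v := congrArg Prod.fst hv
      rw [h1]
      simp [wedgeMap, hξorth]
    · -- second component is 0
      funext h
      have h0m : (0 : ℕ) < m - 1 := by omega
      by_cases hz : h ⟨0, h0m⟩ = 0
      · -- tuple contains a zero entry
        obtain ⟨ξ, hξ0, -⟩ := exists_orth (k := m - 1) (by omega) h
        obtain ⟨v, hv⟩ := hp ξ hξ0
        have h2 : p.2 = interiorMap ξ v := congrArg Prod.snd hv
        rw [h2]
        show interiorMap ξ v h = 0
        unfold interiorMap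
        have h1m : (1 : ℕ) < m := by omega
        have := v.map_coord_zero (m := fun j : Fin m =>
          if h0 : (j : ℕ) = 0 then ξ else h ⟨(j : ℕ) - 1, by have := j.isLt; omega⟩)
          ⟨1, h1m⟩ (by simpa using hz)
        simpa using this
      · -- tuple starts with a nonzero vector; take ξ to be that vector
        obtain ⟨v, hv⟩ := hp (h ⟨0, h0m⟩) hz
        have h2 : p.2 = interiorMap (h ⟨0, h0m⟩) v := congrArg Prod.snd hv
        rw [h2]
        show interiorMap (h ⟨0, h0m⟩) v h = 0
        unfold interiorMap
        have h1m : (1 : ℕ) < m := by omega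
        refine v.map_eq_zero_of_eq _ (i := ⟨0, by omega⟩) (j := ⟨1, h1m⟩) ?_ ?_
        · simp
        · simp [Fin.ext_iff]
end
end

section
/- Let n ≥ 2. Then ⋂_{ξ ∈ ℝⁿ \ {0}} { (ξ vᵀ + v ξᵀ)/2 : v ∈ ℝⁿ } = {0} in the space of symmetric n×n real matrices; that is, the symmetric derivative operator u ↦ D_sym u = (Du + (Du)ᵀ)/2 is cancelling. -/
/-- The symmetric derivative operator `u ↦ D_sym u` is cancelling for `n ≥ 2`:
the intersection over `ξ ≠ 0` of the images `{(ξ vᵀ + v ξᵀ)/2 : v ∈ ℝⁿ}` of its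
symbol is `{0}` (in the space of symmetric `n × n` real matrices). -/
theorem stmt9 (n : ℕ) (hn : 2 ≤ n) :
    (⋂ ξ ∈ {ξ : Fin n → ℝ | ξ ≠ 0},
        {M : Matrix (Fin n) (Fin n) ℝ | ∃ v : Fin n → ℝ,
          M = (1 / 2 : ℝ) • (Matrix.vecMulVec ξ v + Matrix.vecMulVec v ξ)})
      = ({0} : Set (Matrix (Fin n) (Fin n) ℝ)) := by
  have h01 : (0 : ℕ) < n := by omega
  have h1n : (1 : ℕ) < n := by omega
  set i0 : Fin n := ⟨0, h01⟩
  set i1 : Fin n := ⟨1, h1n⟩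
  have hi : i0 ≠ i1 := by simp [i0, i1, Fin.ext_iff]
  ext M
  simp only [Set.mem_iInter, Set.mem_setOf_eq, Set.mem_singleton_iff]
  constructor
  · intro h
    have hne : ∀ i : Fin n, (Pi.single i (1 : ℝ) : Fin n → ℝ) ≠ 0 := by
      intro i hcon
      have := congrFun hcon i
      simp at this
    obtain ⟨va, hva⟩ := h (Pi.single i0 1) (hne i0)
    obtain ⟨vb, hvb⟩ := h (Pi.single i1 1) (hne i1)
    have hcne : (Pi.single i0 1 + Pi.single i1 1 : Fin n → ℝ) ≠ 0 := by
      intro hcon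
      have := congrFun hcon i0
      simp [Pi.single_apply, hi.symm] at this
    obtain ⟨vc, hvc⟩ := h (Pi.single i0 1 + Pi.single i1 1) hcne
    have ha : ∀ j k, M j k =
        (1/2 : ℝ) * ((Pi.single i0 (1:ℝ) : Fin n → ℝ) j * va k + va j * (Pi.single i0 (1:ℝ) : Fin n → ℝ) k) := by
      intro j k
      rw [hva]
      simp [Matrix.vecMulVec_apply, Matrix.add_apply]
    have hb : ∀ j k, M j k =
        (1/2 : ℝ) * ((Pi.single i1 (1:ℝ) : Fin n → ℝ) j * vb k + vb j * (Pi.single i1 (1:ℝ) : Fin n → ℝ) k) := by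
      intro j k
      rw [hvb]
      simp [Matrix.vecMulVec_apply, Matrix.add_apply]
    set ξc : Fin n → ℝ := Pi.single i0 1 + Pi.single i1 1 with hξc
    have hc : ∀ j k, M j k = (1/2 : ℝ) * (ξc j * vc k + vc j * ξc k) := by
      intro j k
      rw [hvc]
      simp [Matrix.vecMulVec_apply, Matrix.add_apply]
    have hξc0 : ξc i0 = 1 := by simp [hξc, Pi.single_apply, hi.symm]
    have hξc1 : ξc i1 = 1 := by simp [hξc, Pi.single_apply, hi]
    have h00 : M i0 i0 = 0 := by
      rw [hb i0 i0]
      simp [Pi.single_apply, hi]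
    have h11 : M i1 i1 = 0 := by
      rw [ha i1 i1]
      simp [Pi.single_apply, hi.symm]
    have hv0 : vc i0 = 0 := by
      have := h00
      rw [hc i0 i0, hξc0] at this
      linarith
    have hv1 : vc i1 = 0 := by
      have := h11
      rw [hc i1 i1, hξc1] at this
      linarith
    have hM01 : M i0 i1 = 0 := by
      rw [hc i0 i1, hξc0, hξc1, hv0, hv1]; ring
    have hM10 : M i1 i0 = 0 := by
      rw [hc i1 i0, hξc0, hξc1, hv0, hv1]; ring
    ext j k
    simp only [Matrix.zero_apply]
    by_cases hj0 : j = i0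
    · by_cases hk0 : k = i0
      · rw [hj0, hk0]; exact h00
      · by_cases hk1 : k = i1
        · rw [hj0, hk1]; exact hM01
        · rw [hb j k]
          simp [Pi.single_apply, hj0 ▸ hi.symm, hk1]
    · by_cases hj1 : j = i1
      · by_cases hk0 : k = i0
        · rw [hj1, hk0]; exact hM10
        · by_cases hk1 : k = i1
          · rw [hj1, hk1]; exact h11
          · rw [ha j k]
            simp [Pi.single_apply, hj1, hi.symm, hk0]
      · by_cases hk0 : k = i0
        · rw [hb j k]
          simp [Pi.single_apply, hj1, hk0, hi]
        · rw [ha j k]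
          simp [Pi.single_apply, hj0, hk0]
  · intro h ξ hξ
    refine ⟨0, ?_⟩
    rw [h]
    ext j k
    simp [Matrix.vecMulVec_apply]
end

section
/- Let n, k ≥ 1 and let A(D) be a homogeneous linear differential operator of order k on ℝⁿ from V to E which is injectively elliptic. Then there exist m ∈ ℕ \ {0} and a family of linear maps L_β : E → E indexed by multi-indices β ∈ ℕⁿ with |β| = m such that, setting L(ξ) = Σ_{|β|=m} ξ^β L_β for ξ ∈ ℝⁿ, one has for every ξ ∈ ℝⁿ \ {0} that the kernel of L(ξ) equals the image A(ξ)[V] of the symbol of A(D). -/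
open MeasureTheory
open MvPolynomial Matrix

section Helpers

lemma finsupp_degree_fin {n : ℕ} (d : Fin n →₀ ℕ) : d.degree = ∑ i, d i := by
  rw [Finsupp.degree]
  exact Finset.sum_subset (Finset.subset_univ _) (by simp [Finsupp.notMem_support_iff])

lemma det_isHom {σ : Type*} {r : ℕ} (M : Matrix (Fin r) (Fin r) (MvPolynomial σ ℝ))
    (d : Fin r → ℕ) (h : ∀ i j, (M i j).IsHomogeneous (d i)) :
    M.det.IsHomogeneous (∑ i, d i) := by
  rw [Matrix.det_apply]
  apply MvPolynomial.IsHomogeneous.sum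
  intro p _
  have hp : (∏ i, M (p i) i).IsHomogeneous (∑ i, d (p i)) :=
    MvPolynomial.IsHomogeneous.prod _ _ _ (fun i _ => h (p i) i)
  rw [Equiv.sum_comp p d] at hp
  rcases Int.units_eq_one_or (Equiv.Perm.sign p) with hs | hs <;> rw [hs]
  · simpa using hp
  · simpa using hp.neg

lemma adj_isHom {σ : Type*} {r c : ℕ} (M : Matrix (Fin r) (Fin r) (MvPolynomial σ ℝ))
    (h : ∀ i j, (M i j).IsHomogeneous c) (a b : Fin r) :
    (M.adjugate a b).IsHomogeneous (c * (r - 1)) := by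
  rw [Matrix.adjugate_apply]
  have key := det_isHom (M.updateRow b (Pi.single a 1)) (fun l => if l = b then 0 else c) ?_
  · have hsum : (∑ l : Fin r, if l = b then 0 else c) = c * (r - 1) := by
      simp [Finset.sum_ite, Finset.filter_ne', Finset.card_erase_of_mem, Finset.card_univ,
        mul_comm]
    rwa [hsum] at key
  · intro i j
    show (M.updateRow b (Pi.single a 1) i j).IsHomogeneous (if i = b then 0 else c)
    rcases eq_or_ne i b with rfl | hib
    · rw [Matrix.updateRow_self, if_pos rfl]
      rcases eq_or_ne j a with rfl | hja
      · simp [Pi.single_apply, MvPolynomial.isHomogeneous_one]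
      · simp [Pi.single_apply, hja, MvPolynomial.isHomogeneous_zero]
    · rw [Matrix.updateRow_ne hib, if_neg hib]
      exact h i j

lemma eval_antidiag {n m : ℕ} (p : MvPolynomial (Fin n) ℝ) (hp : p.IsHomogeneous m)
    (x : Fin n → ℝ) :
    ∑ β ∈ Finset.Nat.antidiagonalTuple n m,
      (∏ i, x i ^ β i) * MvPolynomial.coeff (Finsupp.equivFunOnFinite.symm β) p
      = MvPolynomial.eval x p := by
  have hinj : Set.InjOn (⇑Finsupp.equivFunOnFinite.symm)
      (Finset.Nat.antidiagonalTuple n m : Set (Fin n → ℕ)) := fun a _ b _ hab => by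
    simpa using congrArg Finsupp.equivFunOnFinite hab
  have hsub : p.support ⊆
      (Finset.Nat.antidiagonalTuple n m).image (⇑Finsupp.equivFunOnFinite.symm) := by
    intro d hd
    have hdeg : d.degree = m := by
      rw [Finsupp.degree_eq_weight_one]; exact hp (MvPolynomial.mem_support_iff.mp hd)
    rw [Finset.mem_image]
    refine ⟨Finsupp.equivFunOnFinite d, ?_, by simp⟩
    rw [Finset.Nat.mem_antidiagonalTuple]
    rw [← hdeg, finsupp_degree_fin]
    rfl
  have h1 : MvPolynomial.eval x p =
      ∑ d ∈ (Finset.Nat.antidiagonalTuple n m).image (⇑Finsupp.equivFunOnFinite.symm),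
        MvPolynomial.coeff d p * ∏ i, x i ^ d i := by
    rw [MvPolynomial.eval_eq']
    exact Finset.sum_subset hsub (fun d _ hd => by
      simp [MvPolynomial.notMem_support_iff.mp hd])
  rw [h1, Finset.sum_image hinj]
  apply Finset.sum_congr rfl
  intro β _
  rw [mul_comm]
  rfl

end Helpers

noncomputable section

/-- First-order partial derivative in the `i`-th coordinate direction. -/
def pd {n : ℕ} {V : Type*} [NormedAddCommGroup V] [NormedSpace ℝ V] (i : Fin n)
    (u : EuclideanSpace ℝ (Fin n) → V) : EuclideanSpace ℝ (Fin n) → V :=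
  fun x => fderiv ℝ u x (EuclideanSpace.single i 1)

/-- Iterated partial derivative `∂^α`. -/
def pdMulti {n : ℕ} {V : Type*} [NormedAddCommGroup V] [NormedSpace ℝ V] (α : Fin n → ℕ)
    (u : EuclideanSpace ℝ (Fin n) → V) : EuclideanSpace ℝ (Fin n) → V :=
  (List.finRange n).foldr (fun i v => (pd i)^[α i] v) u

/-- The homogeneous differential operator `A(D) = ∑_{|α|=k} A_α ∂^α` applied to `u`. -/
def opApply {n : ℕ} {V E : Type*} [NormedAddCommGroup V] [NormedSpace ℝ V]
    [NormedAddCommGroup E] [NormedSpace ℝ E]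
    (k : ℕ) (A : (Fin n → ℕ) → (V →ₗ[ℝ] E))
    (u : EuclideanSpace ℝ (Fin n) → V) : EuclideanSpace ℝ (Fin n) → E :=
  fun x => ∑ α ∈ Finset.Nat.antidiagonalTuple n k, A α (pdMulti α u x)

/-- The symbol `A(ξ) = ∑_{|α|=k} ξ^α A_α` of the operator. -/
def symb {n : ℕ} {V E : Type*} [NormedAddCommGroup V] [NormedSpace ℝ V]
    [NormedAddCommGroup E] [NormedSpace ℝ E]
    (k : ℕ) (A : (Fin n → ℕ) → (V →ₗ[ℝ] E)) (ξ : EuclideanSpace ℝ (Fin n)) :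
    V →ₗ[ℝ] E :=
  ∑ α ∈ Finset.Nat.antidiagonalTuple n k, (∏ i, ξ i ^ α i) • A α

/-- Compatibility conditions: if `A(D)` is injectively elliptic, there is a homogeneous
operator `L(D)` of some order `m ≥ 1` from `E` to `E` whose symbol satisfies
`ker L(ξ) = A(ξ)[V]` for every `ξ ≠ 0`. -/
theorem stmt10
    {V E : Type*} [NormedAddCommGroup V] [InnerProductSpace ℝ V] [FiniteDimensional ℝ V]
    [NormedAddCommGroup E] [InnerProductSpace ℝ E] [FiniteDimensional ℝ E]
    (n k : ℕ) (hn : 1 ≤ n) (hk : 1 ≤ k)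
    (A : (Fin n → ℕ) → (V →ₗ[ℝ] E))
    (hell : ∀ ξ : EuclideanSpace ℝ (Fin n), ξ ≠ 0 → Function.Injective (symb k A ξ)) :
    ∃ (m : ℕ), 0 < m ∧ ∃ L : (Fin n → ℕ) → (E →ₗ[ℝ] E),
      ∀ ξ : EuclideanSpace ℝ (Fin n), ξ ≠ 0 →
        LinearMap.ker (symb m L ξ) = LinearMap.range (symb k A ξ) := by
  classical
  set dV := Module.finrank ℝ V with hdVdef
  set dE := Module.finrank ℝ E with hdEdef
  set bV : Module.Basis (Fin dV) ℝ V := Module.finBasis ℝ V with hbV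
  set bE : Module.Basis (Fin dE) ℝ E := Module.finBasis ℝ E with hbE
  set P : Matrix (Fin dE) (Fin dV) (MvPolynomial (Fin n) ℝ) :=
    Matrix.of fun i j => ∑ α ∈ Finset.Nat.antidiagonalTuple n k,
      MvPolynomial.monomial (Finsupp.equivFunOnFinite.symm α)
        ((LinearMap.toMatrix bV bE (A α)) i j) with hP
  set G : Matrix (Fin dV) (Fin dV) (MvPolynomial (Fin n) ℝ) := Pᵀ * P with hG
  set s : MvPolynomial (Fin n) ℝ := ∑ i, (MvPolynomial.X i) ^ 2 with hs
  set N : Matrix (Fin dE) (Fin dE) (MvPolynomial (Fin n) ℝ) :=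
    s • (G.det • (1 : Matrix (Fin dE) (Fin dE) (MvPolynomial (Fin n) ℝ))
      - P * G.adjugate * Pᵀ) with hN
  set m := 2 * k * dV + 2 with hm
  -- homogeneity of the entries of P
  have hPhom : ∀ i j, (P i j).IsHomogeneous k := by
    intro i j
    rw [hP]
    simp only [Matrix.of_apply]
    apply MvPolynomial.IsHomogeneous.sum
    intro α hα
    apply MvPolynomial.isHomogeneous_monomial
    rw [finsupp_degree_fin]
    exact Finset.Nat.mem_antidiagonalTuple.mp hα
  have hGhom : ∀ a b, (G a b).IsHomogeneous (2 * k) := by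
    intro a b
    rw [hG, Matrix.mul_apply]
    apply MvPolynomial.IsHomogeneous.sum
    intro l _
    have := (hPhom l a).mul (hPhom l b)
    simpa [Matrix.transpose_apply, two_mul] using this
  have hdethom : G.det.IsHomogeneous (2 * k * dV) := by
    have := det_isHom G (fun _ => 2 * k) (fun a b => hGhom a b)
    simpa [Finset.sum_const, Finset.card_univ, mul_comm] using this
  have hshom : s.IsHomogeneous 2 := by
    apply MvPolynomial.IsHomogeneous.sum
    intro i _
    simpa using MvPolynomial.isHomogeneous_X_pow (R := ℝ) i 2
  have hNhom : ∀ i j, (N i j).IsHomogeneous m := by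
    intro i j
    rw [hN]
    have h1 : ((G.det • (1 : Matrix (Fin dE) (Fin dE) (MvPolynomial (Fin n) ℝ))
        - P * G.adjugate * Pᵀ) i j).IsHomogeneous (2 * k * dV) := by
      rw [Matrix.sub_apply]
      apply MvPolynomial.IsHomogeneous.sub
      · rw [Matrix.smul_apply, Matrix.one_apply, smul_eq_mul, mul_ite, mul_one, mul_zero]
        split
        · exact hdethom
        · exact MvPolynomial.isHomogeneous_zero _ _ _
      · rw [Matrix.mul_apply]
        apply MvPolynomial.IsHomogeneous.sum
        intro b _
        rw [Matrix.mul_apply, Finset.sum_mul]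
        apply MvPolynomial.IsHomogeneous.sum
        intro a _
        have hd1 : 1 ≤ dV := a.pos
        have := ((hPhom i a).mul (adj_isHom G hGhom a b)).mul (hPhom j b)
        have harith : k + 2 * k * (dV - 1) + k = 2 * k * dV := by
          obtain ⟨t, ht⟩ : ∃ t, dV = t + 1 := ⟨dV - 1, by omega⟩
          rw [ht]; simp only [Nat.add_sub_cancel]; ring
        rw [harith] at this
        simpa [Matrix.transpose_apply] using this
    have := hshom.mul h1
    rw [Matrix.smul_apply, smul_eq_mul]
    have harith2 : 2 + 2 * k * dV = m := by rw [hm]; omega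
    rwa [harith2] at this
  refine ⟨m, by omega, fun β => Matrix.toLin bE bE
    (Matrix.of fun i j => MvPolynomial.coeff (Finsupp.equivFunOnFinite.symm β) (N i j)), ?_⟩
  intro ξ hξ
  set ξf : Fin n → ℝ := fun i => ξ i with hξf
  set φ : MvPolynomial (Fin n) ℝ →+* ℝ := MvPolynomial.eval ξf with hφ
  set Mm : Matrix (Fin dE) (Fin dV) ℝ := LinearMap.toMatrix bV bE (symb k A ξ) with hMm
  -- evaluation of P is the matrix of the symbol
  have hPeval : P.map φ = Mm := by
    ext i j
    rw [Matrix.map_apply, hMm, hP]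
    rw [symb, map_sum]
    rw [Matrix.of_apply, map_sum, Matrix.sum_apply]
    apply Finset.sum_congr rfl
    intro α _
    rw [MvPolynomial.eval_monomial, _root_.map_smul, Matrix.smul_apply, smul_eq_mul, mul_comm]
    congr 1
    rw [Finsupp.prod_fintype _ _ (fun i => pow_zero _)]
    rfl
  have hGeval : G.map ⇑φ = Mmᵀ * Mm := by
    rw [hG, Matrix.map_mul, Matrix.transpose_map, hPeval]
  -- matrix of the symbol of L
  have hLmat : LinearMap.toMatrix bE bE (symb m (fun β => Matrix.toLin bE bE
      (Matrix.of fun i j => MvPolynomial.coeff (Finsupp.equivFunOnFinite.symm β) (N i j))) ξ)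
      = N.map φ := by
    ext i j
    rw [symb, map_sum, Matrix.sum_apply, Matrix.map_apply]
    rw [← eval_antidiag (N i j) (hNhom i j) ξf]
    apply Finset.sum_congr rfl
    intro β _
    rw [_root_.map_smul, Matrix.smul_apply, LinearMap.toMatrix_toLin, smul_eq_mul]
    rfl
  -- evaluation of N
  have hPadj : (P * G.adjugate * Pᵀ).map φ = Mm * (Mmᵀ * Mm).adjugate * Mmᵀ := by
    rw [Matrix.map_mul, Matrix.map_mul, hPeval, Matrix.transpose_map, hPeval]
    congr 1
    have := (φ.map_adjugate G)
    rw [RingHom.mapMatrix_apply, RingHom.mapMatrix_apply] at this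
    rw [this, hGeval]
  have hdeteval : φ G.det = (Mmᵀ * Mm).det := by
    have := φ.map_det G
    rw [RingHom.mapMatrix_apply, hGeval] at this
    exact this
  set d : ℝ := (Mmᵀ * Mm).det with hd
  set sv : ℝ := φ s with hsv
  have hNeval : N.map φ = sv • (d • (1 : Matrix (Fin dE) (Fin dE) ℝ)
      - Mm * (Mmᵀ * Mm).adjugate * Mmᵀ) := by
    ext i j
    have h2 : φ ((P * G.adjugate * Pᵀ) i j) = (Mm * (Mmᵀ * Mm).adjugate * Mmᵀ) i j := by
      rw [← Matrix.map_apply (f := φ), hPadj]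
    rw [Matrix.map_apply, hN]
    simp only [Matrix.smul_apply, Matrix.sub_apply, Matrix.one_apply, smul_eq_mul,
      mul_ite, mul_one, mul_zero]
    rw [_root_.map_mul, _root_.map_sub, h2, apply_ite φ, hdeteval, map_zero, hsv]
  -- pass to linear maps
  set f : V →ₗ[ℝ] E := symb k A ξ with hf
  set h : E →ₗ[ℝ] V := Matrix.toLin bE bV ((Mmᵀ * Mm).adjugate * Mmᵀ) with hh
  have hfM : f = Matrix.toLin bV bE Mm := by rw [hMm, Matrix.toLin_toMatrix]
  have hfh : f ∘ₗ h = Matrix.toLin bE bE (Mm * ((Mmᵀ * Mm).adjugate * Mmᵀ)) := by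
    rw [Matrix.toLin_mul bE bV bE, hfM, hh]
  have hgeq : symb m (fun β => Matrix.toLin bE bE
      (Matrix.of fun i j => MvPolynomial.coeff (Finsupp.equivFunOnFinite.symm β) (N i j))) ξ
      = sv • (d • (LinearMap.id : E →ₗ[ℝ] E) - f ∘ₗ h) := by
    have h3 := congrArg (Matrix.toLin bE bE) (hLmat.trans hNeval)
    rw [Matrix.toLin_toMatrix] at h3
    rw [h3, _root_.map_smul, _root_.map_sub, _root_.map_smul, Matrix.toLin_one, hfh,
      Matrix.mul_assoc]
  have hcomp : h ∘ₗ f = d • (LinearMap.id : V →ₗ[ℝ] V) := by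
    rw [hfM, hh, ← Matrix.toLin_mul bV bE bV, Matrix.mul_assoc, Matrix.adjugate_mul,
      _root_.map_smul, Matrix.toLin_one, ← hd]
  -- nonvanishing of sv
  have hsv0 : sv ≠ 0 := by
    intro h0
    apply hξ
    have hsum : ∑ i, ξf i ^ 2 = 0 := by
      rw [hsv, hs, map_sum] at h0
      simp only [map_pow, hφ, MvPolynomial.eval_X] at h0
      exact h0
    have hall := (Finset.sum_eq_zero_iff_of_nonneg
      (fun i _ => sq_nonneg (ξ i))).mp hsum
    ext i
    have := hall i (Finset.mem_univ i)
    exact pow_eq_zero_iff (by norm_num) |>.mp this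
  -- nonvanishing of d
  have hMinj : Function.Injective (Mm.mulVec) := by
    intro x y hxy
    have hlin : ∀ z : Fin dV → ℝ, Mm.mulVec z = ⇑(bE.repr (f (bV.equivFun.symm z))) := by
      intro z
      have h1 := LinearMap.toMatrix_mulVec_repr bV bE f (bV.equivFun.symm z)
      rw [← hMm] at h1
      have h2 : (bV.repr (bV.equivFun.symm z) : Fin dV → ℝ) = z := by
        rw [← Module.Basis.equivFun_apply]
        exact bV.equivFun.apply_symm_apply z
      rw [h2] at h1
      exact h1
    rw [hlin x, hlin y] at hxy
    have h1 : f (bV.equivFun.symm x) = f (bV.equivFun.symm y) := by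
      apply bE.repr.injective
      exact DFunLike.coe_injective hxy
    have h2 := hell ξ hξ h1
    exact bV.equivFun.symm.injective h2
  have hd0 : d ≠ 0 := by
    intro h0
    obtain ⟨x, hx0, hx⟩ := (Matrix.exists_mulVec_eq_zero_iff).mpr (hd ▸ h0)
    have hMx : Mm.mulVec x = 0 := by
      have h1 : x ⬝ᵥ ((Mmᵀ * Mm).mulVec x) = 0 := by rw [hx, dotProduct_zero]
      rw [← Matrix.mulVec_mulVec, Matrix.dotProduct_mulVec, Matrix.vecMul_transpose] at h1
      exact dotProduct_self_eq_zero.mp h1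
    have : x = 0 := by
      apply hMinj
      rw [hMx, Matrix.mulVec_zero]
    exact hx0 this
  -- conclude
  rw [hgeq]
  ext v
  constructor
  · intro hv
    rw [LinearMap.mem_ker] at hv
    simp only [LinearMap.smul_apply, LinearMap.sub_apply, LinearMap.comp_apply,
      LinearMap.id_apply] at hv
    have hv2 : d • v - f (h v) = 0 := by
      rcases smul_eq_zero.mp hv with h1 | h1
      · exact absurd h1 hsv0
      · exact h1
    have hv3 : v = f (d⁻¹ • h v) := by
      rw [LinearMap.map_smul]
      rw [sub_eq_zero] at hv2
      rw [← hv2, smul_smul, inv_mul_cancel₀ hd0, one_smul]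
    exact ⟨d⁻¹ • h v, hv3.symm⟩
  · rintro ⟨w, rfl⟩
    rw [LinearMap.mem_ker]
    simp only [LinearMap.smul_apply, LinearMap.sub_apply, LinearMap.comp_apply,
      LinearMap.id_apply]
    have hw : h (f w) = d • w := by
      have := congrArg (fun g => g w) hcomp
      simpa using this
    rw [hw, LinearMap.map_smul, sub_self, smul_zero]


end
end
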